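/- Let v₁,…,v_{N+1} be an obtuse system in ℂ^N with pᵢ = 1/(1 + ‖vᵢ‖²). Then Σᵢ pᵢ vᵢ = 0. -/

import Mathlib

/-- for an obtuse system `v₁,…,v_{N+1}` in `ℂ^N` with
`pᵢ = 1/(1+‖vᵢ‖²)`, one has `∑ i, pᵢ vᵢ = 0`. -/
theorem stmt9 {N : ℕ} (v : Fin (N + 1) → EuclideanSpace ℂ (Fin N))
    (hv : ∀ i j, i ≠ j → (inner ℂ (v i) (v j) : ℂ) = -1) :
    ∑ i, (1 / (1 + ‖v i‖ ^ 2) : ℝ) • v i = 0 := by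
  -- N+1 vectors in an N-dimensional space are dependent
  have hnli : ¬ LinearIndependent ℂ v := by
    intro h
    have := h.fintype_card_le_finrank
    simp [finrank_euclideanSpace] at this
  obtain ⟨g, hg0, i0, hi0⟩ := Fintype.not_linearIndependent_iff.mp hnli
  set C : ℂ := ∑ i, g i with hC
  have hne : ∀ j, (1 + (‖v j‖ : ℂ) ^ 2) ≠ 0 := by
    intro j h
    have h1 : ((1 + ‖v j‖ ^ 2 : ℝ) : ℂ) = 0 := by push_cast; exact h
    have h2 : (1 + ‖v j‖ ^ 2 : ℝ) = 0 := by exact_mod_cast h1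
    nlinarith [sq_nonneg ‖v j‖]
  have key : ∀ j, g j * (1 + (‖v j‖ : ℂ) ^ 2) = C := by
    intro j
    have h := congrArg (fun w => (inner ℂ (v j) w : ℂ)) hg0
    simp only [inner_sum, inner_smul_right, inner_zero_right] at h
    rw [← Finset.add_sum_erase _ _ (Finset.mem_univ j)] at h
    have hrest : ∑ i ∈ Finset.univ.erase j, g i * (inner ℂ (v j) (v i) : ℂ)
        = -(C - g j) := by
      rw [Finset.sum_congr rfl (fun i hi => by
        rw [hv j i (Ne.symm (Finset.ne_of_mem_erase hi))])]
      rw [Finset.sum_erase_eq_sub (Finset.mem_univ j)] at *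
      simp [hC]
      ring
    have hinner : (inner ℂ (v j) (v j) : ℂ) = (‖v j‖ : ℂ) ^ 2 := by
      rw [inner_self_eq_norm_sq_to_K]; norm_cast
    rw [hrest, hinner] at h
    linear_combination h
  have hCne : C ≠ 0 := by
    intro h
    apply hi0
    have := key i0
    rw [h, mul_eq_zero] at this
    tauto
  have hgj : ∀ j, g j = C * (1 + (‖v j‖ : ℂ) ^ 2)⁻¹ := by
    intro j
    rw [← key j, mul_assoc, mul_inv_cancel₀ (hne j), mul_one]
  calc ∑ i, (1 / (1 + ‖v i‖ ^ 2) : ℝ) • v i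
      = C⁻¹ • ∑ i, g i • v i := by
        rw [Finset.smul_sum]
        refine Finset.sum_congr rfl fun i _ => ?_
        rw [smul_smul, hgj i, ← mul_assoc, inv_mul_cancel₀ hCne, one_mul,
          RCLike.real_smul_eq_coe_smul (K := ℂ)]
        congr 1
        rw [one_div]
        norm_cast
    _ = 0 := by rw [hg0, smul_zero]
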